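/- The affine symmetric group S̃_n embeds into the group of bijections w: ℤ → ℤ satisfying w(i+n) = w(i)+n for all i and Σ_{i=1}^n (w(i) − i) = 0, where the generator s_i maps to the bijection exchanging i+kn and i+1+kn for all k ∈ ℤ and fixing all other integers. -/

import Mathlib

/-- The defining relators of the affine symmetric group `S̃_n` on generators
`s_i`, `i ∈ ℤ/nℤ`: `s_i² = 1`, the braid relations `s_i s_{i+1} s_i = s_{i+1} s_i s_{i+1}`,
and the commutation relations `s_i s_j = s_j s_i` for `i − j ≢ 0, ±1 (mod n)`. -/
def affineRels (n : ℕ) : Set (FreeGroup (ZMod n)) :=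
  {r | (∃ i : ZMod n, r = FreeGroup.of i * FreeGroup.of i) ∨
       (∃ i : ZMod n, r = FreeGroup.of i * FreeGroup.of (i + 1) * FreeGroup.of i *
          (FreeGroup.of (i + 1) * FreeGroup.of i * FreeGroup.of (i + 1))⁻¹) ∨
       (∃ i j : ZMod n, j ≠ i ∧ j ≠ i + 1 ∧ i ≠ j + 1 ∧
          r = FreeGroup.of i * FreeGroup.of j * (FreeGroup.of j * FreeGroup.of i)⁻¹)}

/-- The affine symmetric group `S̃_n`, given by its Coxeter presentation. -/
abbrev AffineSymmetricGroup (n : ℕ) := PresentedGroup (affineRels n)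


set_option linter.unusedSectionVars false

namespace AffProof

variable (n : ℕ) [hf : Fact (2 < n)]

instance : NeZero n := ⟨by have := hf.out; omega⟩

variable {n}

theorem one_ne_zero' : (1 : ZMod n) ≠ 0 := by
  intro h1
  have h2 : n ∣ 1 := by exact_mod_cast (ZMod.natCast_eq_zero_iff 1 n).mp (by exact_mod_cast h1)
  have := Nat.le_of_dvd one_pos h2
  have := hf.out; omega

theorem two_ne_zero' : (2 : ZMod n) ≠ 0 := by
  intro h1
  have h2 : n ∣ 2 := by exact_mod_cast (ZMod.natCast_eq_zero_iff 2 n).mp (by exact_mod_cast h1)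
  have := Nat.le_of_dvd two_pos h2
  have := hf.out; omega

theorem n10 (j : ZMod n) : j + 1 ≠ j := fun h => one_ne_zero' (by linear_combination h)
theorem n01 (j : ZMod n) : j ≠ j + 1 := fun h => one_ne_zero' (by linear_combination -h)
theorem n20 (j : ZMod n) : j + 2 ≠ j := fun h => two_ne_zero' (by linear_combination h)
theorem n02 (j : ZMod n) : j ≠ j + 2 := fun h => two_ne_zero' (by linear_combination -h)
theorem n21 (j : ZMod n) : j + 2 ≠ j + 1 := fun h => one_ne_zero' (by linear_combination h)
theorem n12 (j : ZMod n) : j + 1 ≠ j + 2 := fun h => one_ne_zero' (by linear_combination -h)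

theorem cast_add_one (a : ℤ) : ((a + 1 : ℤ) : ZMod n) = (a : ZMod n) + 1 := by push_cast; ring
theorem cast_sub_one (a : ℤ) : ((a - 1 : ℤ) : ZMod n) = (a : ZMod n) - 1 := by push_cast; ring
theorem cast_add_two (a : ℤ) : ((a + 2 : ℤ) : ZMod n) = (a : ZMod n) + 2 := by push_cast; ring

theorem sub_one_eq {i : ZMod n} {a : ℤ} (h : (a : ZMod n) = i + 1) :
    ((a - 1 : ℤ) : ZMod n) = i := by rw [cast_sub_one, h]; ring

/-- the underlying function of the generator permutation -/
def fa (n : ℕ) (i : ZMod n) (a : ℤ) : ℤ :=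
  if (a : ZMod n) = i then a + 1 else if (a : ZMod n) = i + 1 then a - 1 else a

theorem fa_eq1 {i : ZMod n} {a : ℤ} (h : (a : ZMod n) = i) : fa n i a = a + 1 := by
  unfold fa; rw [if_pos h]

theorem fa_eq2 {i : ZMod n} {a : ℤ} (h : (a : ZMod n) = i + 1) : fa n i a = a - 1 := by
  have h1 : (a : ZMod n) ≠ i := by rw [h]; exact n10 i
  unfold fa; rw [if_neg h1, if_pos h]

theorem fa_eq3 {i : ZMod n} {a : ℤ} (h1 : (a : ZMod n) ≠ i) (h2 : (a : ZMod n) ≠ i + 1) :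
    fa n i a = a := by
  unfold fa; rw [if_neg h1, if_neg h2]

theorem fa_invol (i : ZMod n) : Function.Involutive (fa n i) := by
  intro a
  by_cases h : (a : ZMod n) = i
  · have e1 : fa n i a = a + 1 := fa_eq1 h
    have e2 : fa n i (a + 1) = a := by
      rw [fa_eq2 (by rw [cast_add_one, h])]; ring
    simp only [e1, e2]
  · by_cases h' : (a : ZMod n) = i + 1
    · have e1 : fa n i a = a - 1 := fa_eq2 h'
      have e2 : fa n i (a - 1) = a := by rw [fa_eq1 (sub_one_eq h')]; ring
      simp only [e1, e2]
    · rw [fa_eq3 h h', fa_eq3 h h']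

/-- the generator permutation -/
def sw (i : ZMod n) : Equiv.Perm ℤ := Function.Involutive.toPerm (fa n i) (fa_invol i)

theorem sw_apply (i : ZMod n) (a : ℤ) : sw i a = fa n i a := rfl

theorem sw_mul_self (i : ZMod n) : sw i * sw i = 1 := by
  ext a
  simp only [Equiv.Perm.mul_apply, sw_apply, fa_invol i a, Equiv.Perm.one_apply]

theorem sw_braid (i : ZMod n) : sw i * sw (i + 1) * sw i = sw (i + 1) * sw i * sw (i + 1) := by
  ext a
  simp only [Equiv.Perm.mul_apply, sw_apply]
  by_cases h0 : (a : ZMod n) = i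
  · have e1 : fa n i a = a + 1 := fa_eq1 h0
    have e2 : fa n (i + 1) (a + 1) = a + 2 := by
      rw [fa_eq1 (by rw [cast_add_one, h0])]; ring
    have e3 : fa n i (a + 2) = a + 2 :=
      fa_eq3 (by rw [cast_add_two, h0]; exact n20 i) (by rw [cast_add_two, h0]; exact n21 i)
    have e4 : fa n (i + 1) a = a :=
      fa_eq3 (by rw [h0]; exact n01 i) (by rw [h0, show i+1+1 = i+2 by ring]; exact n02 i)
    simp only [e1, e2, e3, e4]
  · by_cases h1 : (a : ZMod n) = i + 1
    · have e1 : fa n i a = a - 1 := fa_eq2 h1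
      have e2 : fa n (i + 1) (a - 1) = a - 1 :=
        fa_eq3 (by rw [sub_one_eq h1]; exact n01 i)
          (by rw [sub_one_eq h1, show i+1+1 = i+2 by ring]; exact n02 i)
      have e3 : fa n i (a - 1) = a := by rw [fa_eq1 (sub_one_eq h1)]; ring
      have e4 : fa n (i + 1) a = a + 1 := fa_eq1 h1
      have e5 : fa n i (a + 1) = a + 1 :=
        fa_eq3 (by rw [cast_add_one, h1, show i+1+1 = i+2 by ring]; exact Ne.symm (n02 i))
          (by rw [cast_add_one, h1, show i+1+1 = i+2 by ring]; exact Ne.symm (n12 i))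
      have e6 : fa n (i + 1) (a + 1) = a := by
        rw [fa_eq2 (by rw [cast_add_one, h1, show i+1+1 = i+2 by ring])]; ring
      simp only [e1, e2, e3, e4, e5, e6]
    · by_cases h2 : (a : ZMod n) = i + 2
      · have e1 : fa n i a = a :=
          fa_eq3 h0 h1
        have e2 : fa n (i + 1) a = a - 1 := by
          rw [fa_eq2 (by rw [h2]; ring)]
        have e3 : fa n i (a - 1) = a - 2 := by
          rw [fa_eq2 (by rw [cast_sub_one, h2]; ring)]; ring
        have e4 : fa n (i + 1) (a - 2) = a - 2 := by
          refine fa_eq3 ?_ ?_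
          · rw [show a - 2 = a - 1 - 1 by ring, cast_sub_one, cast_sub_one, h2]
            intro h; exact one_ne_zero' (by linear_combination -h)
          · rw [show a - 2 = a - 1 - 1 by ring, cast_sub_one, cast_sub_one, h2]
            intro h; exact two_ne_zero' (by linear_combination -h)
        simp only [e1, e2, e3, e4]
      · have h2' : (a : ZMod n) ≠ i + 1 + 1 := by
          rw [show i+1+1 = i+2 by ring]; exact h2
        have e1 : fa n i a = a := fa_eq3 h0 h1
        have e2 : fa n (i + 1) a = a := fa_eq3 h1 h2'
        simp only [e1, e2]

theorem sw_comm {i j : ZMod n} (hji : j ≠ i) (hj1 : j ≠ i + 1) (hi1 : i ≠ j + 1) :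
    sw i * sw j = sw j * sw i := by
  have hij : i ≠ j := Ne.symm hji
  ext a
  simp only [Equiv.Perm.mul_apply, sw_apply]
  by_cases h0 : (a : ZMod n) = i
  · have e1 : fa n j a = a := fa_eq3 (by rw [h0]; exact hij) (by rw [h0]; exact hi1)
    have e2 : fa n i a = a + 1 := fa_eq1 h0
    have e3 : fa n j (a + 1) = a + 1 :=
      fa_eq3 (by rw [cast_add_one, h0]; exact fun h => hj1 h.symm)
        (by rw [cast_add_one, h0]; exact fun h => hij (by linear_combination h))
    simp only [e1, e2, e3]
  · by_cases h1 : (a : ZMod n) = i + 1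
    · have e1 : fa n j a = a :=
        fa_eq3 (by rw [h1]; exact fun h => hj1 h.symm)
          (by rw [h1]; exact fun h => hij (by linear_combination h))
      have e2 : fa n i a = a - 1 := fa_eq2 h1
      have e3 : fa n j (a - 1) = a - 1 :=
        fa_eq3 (by rw [sub_one_eq h1]; exact hij) (by rw [sub_one_eq h1]; exact hi1)
      simp only [e1, e2, e3]
    · by_cases h2 : (a : ZMod n) = j
      · have e1 : fa n j a = a + 1 := fa_eq1 h2
        have e2 : fa n i (a + 1) = a + 1 :=
          fa_eq3 (by rw [cast_add_one, h2]; exact fun h => hi1 h.symm)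
            (by rw [cast_add_one, h2]; exact fun h => hji (by linear_combination h))
        have e3 : fa n i a = a := fa_eq3 h0 h1
        simp only [e1, e2, e3]
      · by_cases h3 : (a : ZMod n) = j + 1
        · have e1 : fa n j a = a - 1 := fa_eq2 h3
          have e2 : fa n i (a - 1) = a - 1 :=
            fa_eq3 (by rw [sub_one_eq h3]; exact hji) (by rw [sub_one_eq h3]; exact hj1)
          have e3 : fa n i a = a := fa_eq3 h0 h1
          simp only [e1, e2, e3]
        · have e1 : fa n j a = a := fa_eq3 h2 h3
          have e2 : fa n i a = a := fa_eq3 h0 h1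
          simp only [e1, e2]

end AffProof

namespace AffProof

section GroupLemmas

variable {G : Type*} [Group G] {s t : G}

theorem braid_of_cube (hs : s * s = 1) (ht : t * t = 1) (h : (s * t) ^ 3 = 1) :
    s * t * s = t * s * t := by
  have hsi : s⁻¹ = s := inv_eq_of_mul_eq_one_right hs
  have hti : t⁻¹ = t := inv_eq_of_mul_eq_one_right ht
  rw [← mul_inv_eq_one]
  have e : s * t * s * (t * s * t)⁻¹ = (s * t) ^ 3 := by
    rw [pow_succ, pow_succ, pow_one, mul_inv_rev, mul_inv_rev, hsi, hti]
    simp [mul_assoc]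
  rw [e, h]

theorem cube_of_braid (hs : s * s = 1) (ht : t * t = 1) (h : s * t * s = t * s * t) :
    (s * t) ^ 3 = 1 := by
  rw [pow_succ, pow_succ, pow_one]
  calc s * t * (s * t) * (s * t) = s * t * s * (t * s * t) := by simp [mul_assoc]
    _ = s * t * s * (s * t * s) := by rw [← h]
    _ = s * t * ((s * s) * (t * s)) := by simp [mul_assoc]
    _ = s * (t * t) * s := by rw [hs, one_mul]; simp [mul_assoc]
    _ = 1 := by rw [ht, mul_one, hs]

theorem cube_swap {x y : G} (h : (x * y) ^ 3 = 1) : (y * x) ^ 3 = 1 := by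
  have e : (y * x) ^ 3 = y * (x * y) ^ 3 * y⁻¹ := by
    rw [pow_succ, pow_succ, pow_one, pow_succ, pow_succ, pow_one]
    simp [mul_assoc]
  rw [e, h, mul_one, mul_inv_cancel]

theorem sq_of_comm (hs : s * s = 1) (ht : t * t = 1) (h : s * t = t * s) :
    (s * t) ^ 2 = 1 := by
  rw [pow_succ, pow_one]
  calc s * t * (s * t) = s * (t * s) * t := by simp [mul_assoc]
    _ = s * (s * t) * t := by rw [← h]
    _ = (s * s) * (t * t) := by simp [mul_assoc]
    _ = 1 := by rw [hs, ht, one_mul]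

theorem comm_of_sq (hs : s * s = 1) (ht : t * t = 1) (h : (s * t) ^ 2 = 1) :
    s * t = t * s := by
  have hsi : s⁻¹ = s := inv_eq_of_mul_eq_one_right hs
  have hti : t⁻¹ = t := inv_eq_of_mul_eq_one_right ht
  rw [pow_succ, pow_one] at h
  have h2 : (s * t)⁻¹ = s * t := inv_eq_of_mul_eq_one_right h
  calc s * t = (s * t)⁻¹ := h2.symm
    _ = t⁻¹ * s⁻¹ := mul_inv_rev s t
    _ = t * s := by rw [hsi, hti]

end GroupLemmas

section Phi

variable (n : ℕ) [hf : Fact (2 < n)]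

theorem lift_sw_rels : ∀ r ∈ affineRels n, FreeGroup.lift (sw : ZMod n → Equiv.Perm ℤ) r = 1 := by
  rintro r (⟨i, rfl⟩ | ⟨i, rfl⟩ | ⟨i, j, hji, hj1, hi1, rfl⟩)
  · simp only [map_mul, FreeGroup.lift_apply_of]; exact sw_mul_self i
  · simp only [map_mul, map_inv, FreeGroup.lift_apply_of]
    rw [sw_braid i]; simp [mul_assoc]
  · simp only [map_mul, map_inv, FreeGroup.lift_apply_of]
    rw [sw_comm hji hj1 hi1]; simp [mul_assoc]

/-- The homomorphism from the affine symmetric group to permutations of ℤ. -/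
def phi : AffineSymmetricGroup n →* Equiv.Perm ℤ := PresentedGroup.toGroup (lift_sw_rels n)

theorem phi_of (i : ZMod n) : phi n (PresentedGroup.of i) = sw i :=
  PresentedGroup.toGroup.of (lift_sw_rels n)

/-- relators hold in the presented group -/
theorem mk_rel_one {r : FreeGroup (ZMod n)} (hr : r ∈ affineRels n) :
    PresentedGroup.mk (affineRels n) r = 1 :=
  (QuotientGroup.eq_one_iff _).mpr (Subgroup.subset_normalClosure hr)

theorem of_mul_self (i : ZMod n) :
    (PresentedGroup.of i : AffineSymmetricGroup n) * PresentedGroup.of i = 1 := by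
  have := mk_rel_one n (Or.inl ⟨i, rfl⟩)
  rwa [map_mul] at this

theorem of_braid (i : ZMod n) :
    (PresentedGroup.of i : AffineSymmetricGroup n) * PresentedGroup.of (i + 1) *
    PresentedGroup.of i =
    PresentedGroup.of (i + 1) * PresentedGroup.of i * PresentedGroup.of (i + 1) := by
  have := mk_rel_one n (Or.inr (Or.inl ⟨i, rfl⟩))
  rw [map_mul, map_inv, mul_inv_eq_one] at this
  simpa [map_mul, PresentedGroup.of] using this

theorem of_comm {i j : ZMod n} (hji : j ≠ i) (hj1 : j ≠ i + 1) (hi1 : i ≠ j + 1) :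
    (PresentedGroup.of i : AffineSymmetricGroup n) * PresentedGroup.of j =
    PresentedGroup.of j * PresentedGroup.of i := by
  have := mk_rel_one n (Or.inr (Or.inr ⟨i, j, hji, hj1, hi1, rfl⟩))
  rw [map_mul, map_inv, mul_inv_eq_one] at this
  simpa [map_mul, PresentedGroup.of] using this

end Phi

section Cox

variable (n : ℕ) [hf : Fact (2 < n)]

/-- The Coxeter matrix of affine type A. -/
def CM : CoxeterMatrix (ZMod n) where
  M := Matrix.of fun i j => if i = j then 1 else if j = i + 1 ∨ i = j + 1 then 3 else 2
  isSymm := by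
    ext i j
    simp only [Matrix.transpose_apply, Matrix.of_apply]
    by_cases h : i = j
    · subst h; rfl
    · rw [if_neg (Ne.symm h), if_neg h]
      by_cases h2 : j = i + 1 ∨ i = j + 1
      · rw [if_pos h2.symm, if_pos h2]
      · rw [if_neg (fun hh => h2 hh.symm), if_neg h2]
  diagonal := fun i => by simp
  off_diagonal := fun i j h => by
    simp only [Matrix.of_apply, if_neg h]
    split_ifs <;> norm_num

theorem CM_self (i : ZMod n) : CM n i i = 1 := by simp [CM]

theorem CM_adj {i j : ZMod n} (h : j = i + 1 ∨ i = j + 1) : CM n i j = 3 := by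
  have hij : i ≠ j := by
    rcases h with h | h
    · rw [h]; exact n01 i
    · rw [h]; exact n10 j
  simp only [CM, Matrix.of_apply, if_neg hij, if_pos h]

theorem CM_other {i j : ZMod n} (hij : i ≠ j) (h : ¬(j = i + 1 ∨ i = j + 1)) : CM n i j = 2 := by
  simp only [CM, Matrix.of_apply, if_neg hij, if_neg h]

/-- forward homomorphism to the Coxeter group -/
def Fhom : AffineSymmetricGroup n →* (CM n).Group := by
  refine PresentedGroup.toGroup (f := (CM n).simple) ?_
  have hself := (CM n).toCoxeterSystem.simple_mul_simple_self
  simp only [CoxeterMatrix.toCoxeterSystem_simple] at hself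
  rintro r (⟨i, rfl⟩ | ⟨i, rfl⟩ | ⟨i, j, hji, hj1, hi1, rfl⟩) <;>
    simp only [map_mul, map_inv, FreeGroup.lift_apply_of]
  · exact hself i
  · rw [mul_inv_eq_one]
    refine braid_of_cube (hself i) (hself (i+1)) ?_
    have := (CM n).toCoxeterSystem.simple_mul_simple_pow i (i+1)
    simp only [CoxeterMatrix.toCoxeterSystem_simple] at this
    rwa [CM_adj n (Or.inl rfl)] at this
  · rw [mul_inv_eq_one]
    refine comm_of_sq (hself i) (hself j) ?_
    have := (CM n).toCoxeterSystem.simple_mul_simple_pow i j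
    simp only [CoxeterMatrix.toCoxeterSystem_simple] at this
    rwa [CM_other n (Ne.symm hji) (by tauto)] at this

/-- backward homomorphism from the Coxeter group -/
def Ghom : (CM n).Group →* AffineSymmetricGroup n := by
  refine PresentedGroup.toGroup
    (f := fun i => (PresentedGroup.of i : AffineSymmetricGroup n)) ?_
  rintro r ⟨⟨i, j⟩, rfl⟩
  show FreeGroup.lift _ ((CM n).relation i j) = 1
  unfold CoxeterMatrix.relation
  simp only [map_pow, map_mul, FreeGroup.lift_apply_of]
  by_cases hij : i = j
  · subst hij
    rw [CM_self, pow_one]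
    exact of_mul_self n i
  · by_cases hadj : j = i + 1 ∨ i = j + 1
    · rw [CM_adj n hadj]
      rcases hadj with h | h
      · subst h
        exact cube_of_braid (of_mul_self n i) (of_mul_self n (i+1)) (of_braid n i)
      · subst h
        exact cube_swap (cube_of_braid (of_mul_self n j) (of_mul_self n (j+1)) (of_braid n j))
    · rw [CM_other n hij hadj]
      push_neg at hadj
      exact sq_of_comm (of_mul_self n i) (of_mul_self n j)
        (of_comm n (Ne.symm hij) (by tauto) (by tauto))

theorem Ghom_Fhom : (Ghom n).comp (Fhom n) = MonoidHom.id _ := by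
  apply PresentedGroup.ext
  intro x
  simp [Fhom, Ghom, CoxeterMatrix.simple]
  rfl

theorem Fhom_Ghom : (Fhom n).comp (Ghom n) = MonoidHom.id _ := by
  apply PresentedGroup.ext (rels := (CM n).relationsSet)
  intro x
  simp [Fhom, Ghom, CoxeterMatrix.simple]
  rfl

/-- the Coxeter system on the affine symmetric group -/
def cs : CoxeterSystem (CM n) (AffineSymmetricGroup n) :=
  ⟨MonoidHom.toMulEquiv (Fhom n) (Ghom n) (Ghom_Fhom n) (Fhom_Ghom n)⟩

theorem cs_simple (i : ZMod n) : (cs n).simple i = PresentedGroup.of i := by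
  show (Ghom n) (PresentedGroup.of i) = _
  exact PresentedGroup.toGroup.of _

theorem phi_simple (i : ZMod n) : phi n ((cs n).simple i) = sw i := by
  rw [cs_simple, phi_of]

end Cox

end AffProof

namespace AffProof

section Per

variable (n : ℕ) [hf : Fact (2 < n)]

/-- `n`-periodicity of a permutation of ℤ -/
def Per (g : Equiv.Perm ℤ) : Prop := ∀ a : ℤ, g (a + (n : ℤ)) = g a + (n : ℤ)

variable {n}

theorem cast_add_n (a : ℤ) : ((a + (n : ℤ) : ℤ) : ZMod n) = (a : ZMod n) := by
  push_cast [ZMod.natCast_self]; ring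

theorem per_sw (i : ZMod n) : Per n (sw i) := by
  intro a
  simp only [sw_apply]
  by_cases h : (a : ZMod n) = i
  · rw [fa_eq1 h, fa_eq1 (by rw [cast_add_n, h])]; ring
  · by_cases h' : (a : ZMod n) = i + 1
    · rw [fa_eq2 h', fa_eq2 (by rw [cast_add_n, h'])]; ring
    · rw [fa_eq3 h h', fa_eq3 (by rw [cast_add_n]; exact h) (by rw [cast_add_n]; exact h')]

theorem per_one : Per n 1 := fun a => rfl

theorem per_mul {u v : Equiv.Perm ℤ} (hu : Per n u) (hv : Per n v) : Per n (u * v) := by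
  intro a
  simp only [Equiv.Perm.mul_apply, hv a, hu (v a)]

theorem per_inv {g : Equiv.Perm ℤ} (hg : Per n g) : Per n g⁻¹ := by
  intro a
  apply g.injective
  have hgi : ∀ x, g (g⁻¹ x) = x := fun x => Equiv.apply_symm_apply g x
  rw [hgi, hg (g⁻¹ a), hgi]

theorem per_iter {g : Equiv.Perm ℤ} (hg : Per n g) (k : ℤ) (a : ℤ) :
    g (a + k * (n : ℤ)) = g a + k * (n : ℤ) := by
  induction k using Int.induction_on with
  | zero => simp
  | succ k ih =>
    have : a + (k + 1) * (n : ℤ) = (a + k * n) + n := by ring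
    rw [this, hg, ih]; ring
  | pred k ih =>
    have h2 := hg (a + (-(k : ℤ) - 1) * (n : ℤ))
    have e : a + (-(k : ℤ) - 1) * (n : ℤ) + (n : ℤ) = a + (-(k : ℤ)) * n := by ring
    rw [e, ih] at h2
    have : g (a + (-(k : ℤ) - 1) * (n : ℤ)) = g a + (-(k : ℤ)) * n - n := by omega
    rw [this]; ring

/-- canonical representative of a residue class -/
def zrep (r : ZMod n) : ℤ := (r.val : ℤ)

theorem cast_zrep (r : ZMod n) : ((zrep r : ℤ) : ZMod n) = r := by
  unfold zrep
  push_cast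
  exact ZMod.natCast_rightInverse r

theorem decompose (n : ℕ) [hf : Fact (2 < n)] (a : ℤ) :
    ∃ k : ℤ, a = zrep ((a : ZMod n)) + k * (n : ℤ) := by
  have h : ((a - zrep ((a : ZMod n)) : ℤ) : ZMod n) = 0 := by
    push_cast [cast_zrep]; ring
  obtain ⟨k, hk⟩ := (ZMod.intCast_zmod_eq_zero_iff_dvd _ n).mp h
  rw [mul_comm] at hk
  exact ⟨k, by omega⟩

theorem diff_eq {u : Equiv.Perm ℤ} (hu : Per n u) (a : ℤ) :
    u a - a = u (zrep ((a : ZMod n))) - zrep ((a : ZMod n)) := by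
  obtain ⟨k, hk⟩ := decompose n a
  have h2 : u a = u (zrep ((a : ZMod n)) + k * (n : ℤ)) := by rw [← hk]
  rw [per_iter hu] at h2
  omega

/-- the induced map on residues -/
def rmap (v : Equiv.Perm ℤ) (r : ZMod n) : ZMod n := ((v (zrep r) : ℤ) : ZMod n)

theorem rmap_cast {v : Equiv.Perm ℤ} (hv : Per n v) (a : ℤ) :
    ((v a : ℤ) : ZMod n) = rmap v ((a : ZMod n)) := by
  obtain ⟨k, hk⟩ := decompose n a
  have h2 : v a = v (zrep ((a : ZMod n)) + k * (n : ℤ)) := by rw [← hk]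
  rw [per_iter hv] at h2
  rw [h2]
  unfold rmap
  push_cast [ZMod.natCast_self]
  ring

theorem rmap_inj {v : Equiv.Perm ℤ} (hv : Per n v) :
    Function.Injective (rmap v : ZMod n → ZMod n) := by
  intro r r' h
  have h2 : ((v (zrep r) - v (zrep r') : ℤ) : ZMod n) = 0 := by
    push_cast
    rw [show ((v (zrep r) : ℤ) : ZMod n) = rmap v r from rfl,
      show ((v (zrep r') : ℤ) : ZMod n) = rmap v r' from rfl, h]
    ring
  obtain ⟨k, hk⟩ := (ZMod.intCast_zmod_eq_zero_iff_dvd _ n).mp h2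
  rw [mul_comm] at hk
  have h3 : v (zrep r) = v (zrep r' + k * n) := by rw [per_iter hv]; omega
  have h4 : zrep r = zrep r' + k * n := v.injective h3
  have := congrArg (fun x : ℤ => (x : ZMod n)) h4
  simpa [cast_zrep, ZMod.natCast_self] using this

theorem rmap_bij {v : Equiv.Perm ℤ} (hv : Per n v) :
    Function.Bijective (rmap v : ZMod n → ZMod n) :=
  Finite.injective_iff_bijective.mp (rmap_inj hv)

/-- reindexing sums over `[1, n]` by residues -/
theorem sum_icc_eq_sum_zmod (G : ZMod n → ℤ) :
    ∑ a ∈ Finset.Icc (1 : ℤ) (n : ℤ), G ((a : ZMod n)) = ∑ r : ZMod n, G r := by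
  have hn3 := hf.out
  refine Finset.sum_nbij' (fun a => ((a : ZMod n))) (fun r => if r = 0 then (n : ℤ) else zrep r)
    ?_ ?_ ?_ ?_ ?_
  · intro a _; exact Finset.mem_univ _
  · intro r _
    by_cases h : r = 0
    · simp only [if_pos h, Finset.mem_Icc]; omega
    · simp only [if_neg h, Finset.mem_Icc, zrep]
      have h1 : r.val ≠ 0 := fun hh => h ((ZMod.val_eq_zero r).mp hh)
      have h2 : r.val < n := ZMod.val_lt r
      omega
  · intro a ha
    rw [Finset.mem_Icc] at ha
    by_cases h : (a : ZMod n) = 0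
    · rw [if_pos h]
      obtain ⟨k, hk⟩ := (ZMod.intCast_zmod_eq_zero_iff_dvd _ n).mp h
      have hn0 : 0 < (n:ℤ) := by omega
      have h1 : (1:ℤ) ≤ k := by
        by_contra hc; push_neg at hc
        have hk0 : k ≤ 0 := by omega
        nlinarith [ha.1]
      have h2 : k ≤ 1 := by
        by_contra hc; push_neg at hc
        have hk2 : 2 ≤ k := by omega
        nlinarith [ha.2]
      have hk1 : k = 1 := by omega
      subst hk1
      rw [mul_one] at hk
      omega
    · rw [if_neg h]
      have hval : ((a : ZMod n).val : ℤ) = a % (n : ℤ) := ZMod.val_intCast a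
      have hne : a ≠ (n : ℤ) := by
        intro hh; apply h; rw [hh]; exact_mod_cast ZMod.natCast_self n
      unfold zrep
      rw [hval, Int.emod_eq_of_lt (by omega) (by omega)]
  · intro r _
    by_cases h : r = 0
    · rw [if_pos h, h]; exact_mod_cast ZMod.natCast_self n
    · rw [if_neg h]; exact cast_zrep r
  · intro a _; rfl

theorem sum_diff_comp {u v : Equiv.Perm ℤ} (hu : Per n u) (hv : Per n v) :
    ∑ a ∈ Finset.Icc (1 : ℤ) (n : ℤ), (u (v a) - v a) =
    ∑ a ∈ Finset.Icc (1 : ℤ) (n : ℤ), (u a - a) := by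
  have step1 : ∀ a : ℤ, u (v a) - v a = (fun r => u (zrep r) - zrep r) (rmap v ((a : ZMod n))) := by
    intro a
    rw [← rmap_cast hv a]
    exact diff_eq hu (v a)
  calc ∑ a ∈ Finset.Icc (1 : ℤ) (n : ℤ), (u (v a) - v a)
      = ∑ a ∈ Finset.Icc (1 : ℤ) (n : ℤ), (fun r => u (zrep r) - zrep r) (rmap v ((a : ZMod n))) :=
        Finset.sum_congr rfl (fun a _ => step1 a)
    _ = ∑ r : ZMod n, (fun r => u (zrep r) - zrep r) (rmap v r) :=
        sum_icc_eq_sum_zmod (fun r => (fun r' => u (zrep r') - zrep r') (rmap v r))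
    _ = ∑ r : ZMod n, (u (zrep r) - zrep r) :=
        Fintype.sum_bijective (rmap v) (rmap_bij hv) _ _ (fun r => rfl)
    _ = ∑ a ∈ Finset.Icc (1 : ℤ) (n : ℤ), (u (zrep ((a : ZMod n))) - zrep ((a : ZMod n))) :=
        (sum_icc_eq_sum_zmod _).symm
    _ = ∑ a ∈ Finset.Icc (1 : ℤ) (n : ℤ), (u a - a) :=
        Finset.sum_congr rfl (fun a _ => (diff_eq hu a).symm)

variable (n)

/-- the subgroup of periodic, sum-zero permutations -/
def HH : Subgroup (Equiv.Perm ℤ) where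
  carrier := {g | Per n g ∧ ∑ a ∈ Finset.Icc (1 : ℤ) (n : ℤ), (g a - a) = 0}
  one_mem' := ⟨per_one, by simp⟩
  mul_mem' := by
    rintro u v ⟨hu, hsu⟩ ⟨hv, hsv⟩
    refine ⟨per_mul hu hv, ?_⟩
    have : ∀ a : ℤ, (u * v) a - a = (u (v a) - v a) + (v a - a) := by
      intro a; simp [Equiv.Perm.mul_apply]
    rw [Finset.sum_congr rfl (fun a _ => this a), Finset.sum_add_distrib,
      sum_diff_comp hu hv, hsu, hsv]
    ring
  inv_mem' := by
    rintro g ⟨hg, hsg⟩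
    refine ⟨per_inv hg, ?_⟩
    have h1 := sum_diff_comp (per_inv hg) hg
    simp only [show ∀ x, g⁻¹ (g x) = x from fun x => Equiv.symm_apply_apply g x] at h1
    have h2 : ∑ a ∈ Finset.Icc (1 : ℤ) (n : ℤ), (a - g a) = 0 := by
      have : ∀ a : ℤ, a - g a = -(g a - a) := fun a => by ring
      rw [Finset.sum_congr rfl (fun a _ => this a), Finset.sum_neg_distrib, hsg, neg_zero]
    rw [← h1, h2]

variable {n}

theorem sw_mem_HH (i : ZMod n) : sw i ∈ HH n := by
  constructor
  · exact per_sw i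
  · have key : ∀ a : ℤ, sw i a - a =
        (fun r => if r = i then (1 : ℤ) else if r = i + 1 then (-1 : ℤ) else 0) ((a : ZMod n)) := by
      intro a
      dsimp only
      by_cases h : (a : ZMod n) = i
      · rw [sw_apply, fa_eq1 h, if_pos h]; ring
      · by_cases h' : (a : ZMod n) = i + 1
        · rw [sw_apply, fa_eq2 h', if_neg h, if_pos h']; ring
        · rw [sw_apply, fa_eq3 h h', if_neg h, if_neg h']; ring
    rw [Finset.sum_congr rfl (fun a _ => key a)]
    refine Eq.trans (sum_icc_eq_sum_zmod (n := n)
      (fun r => if r = i then (1:ℤ) else if r = i + 1 then (-1:ℤ) else 0)) ?_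
    have expand : ∀ r : ZMod n, (if r = i then (1 : ℤ) else if r = i + 1 then (-1 : ℤ) else 0)
        = (if r = i then (1 : ℤ) else 0) + (if r = i + 1 then (-1 : ℤ) else 0) := by
      intro r
      by_cases h : r = i
      · have : r ≠ i + 1 := by rw [h]; exact n01 i
        rw [if_pos h, if_pos h, if_neg this, add_zero]
      · by_cases h' : r = i + 1
        · simp [h, h', one_ne_zero']
        · simp [h, h', one_ne_zero']
    rw [Finset.sum_congr rfl (fun r _ => expand r), Finset.sum_add_distrib,
      Finset.sum_ite_eq' Finset.univ i (fun _ => (1:ℤ)),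
      Finset.sum_ite_eq' Finset.univ (i+1) (fun _ => (-1:ℤ))]
    simp

theorem phi_mem_HH (g : AffineSymmetricGroup n) : phi n g ∈ HH n := by
  have : g ∈ (HH n).comap (phi n) := by
    apply PresentedGroup.generated_by
    intro j
    show phi n (PresentedGroup.of j) ∈ HH n
    rw [phi_of]
    exact sw_mem_HH j
  exact this

end Per

end AffProof

namespace AffProof

section KeyAux

variable {n : ℕ} [hf : Fact (2 < n)]

theorem sw_eq1 {i : ZMod n} {a : ℤ} (h : (a : ZMod n) = i) : sw i a = a + 1 := fa_eq1 h
theorem sw_eq2 {i : ZMod n} {a : ℤ} (h : (a : ZMod n) = i + 1) : sw i a = a - 1 := fa_eq2 h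
theorem sw_eq3 {i : ZMod n} {a : ℤ} (h1 : (a : ZMod n) ≠ i) (h2 : (a : ZMod n) ≠ i + 1) :
    sw i a = a := fa_eq3 h1 h2

end KeyAux

section Key

variable (n : ℕ) [hf : Fact (2 < n)]

theorem phi_mul_simple (w : AffineSymmetricGroup n) (k : ZMod n) (b : ℤ) :
    phi n (w * (cs n).simple k) b = phi n w (sw k b) := by
  rw [map_mul, phi_simple]
  rfl

/-- braid relation for simples -/
theorem simple_braid (i : ZMod n) :
    (cs n).simple i * (cs n).simple (i + 1) * (cs n).simple i =
    (cs n).simple (i + 1) * (cs n).simple i * (cs n).simple (i + 1) := by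
  rw [cs_simple, cs_simple]
  exact of_braid n i

theorem simple_comm {i j : ZMod n} (hji : j ≠ i) (hj1 : j ≠ i + 1) (hi1 : i ≠ j + 1) :
    (cs n).simple i * (cs n).simple j = (cs n).simple j * (cs n).simple i := by
  rw [cs_simple, cs_simple]
  exact of_comm n hji hj1 hi1

theorem len_mul_simple_le (x : AffineSymmetricGroup n) (k : ZMod n) :
    (cs n).length (x * (cs n).simple k) ≤ (cs n).length x + 1 := by
  have := (cs n).length_mul_le x ((cs n).simple k)
  rwa [(cs n).length_simple] at this

/-- Key positivity theorem (Humphreys 5.4 style): if `i` is not a right descent of `w`,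
then `φ w` is increasing on the residue class of `i`. -/
theorem key : ∀ N : ℕ, ∀ w : AffineSymmetricGroup n, (cs n).length w = N →
    ∀ i : ZMod n, ¬ (cs n).IsRightDescent w i →
    ∀ a : ℤ, (a : ZMod n) = i → phi n w a < phi n w (a + 1) := by
  intro N
  induction N using Nat.strong_induction_on with
  | _ N IH =>
  intro w hw i hdi a ha
  have ha1 : ((a + 1 : ℤ) : ZMod n) = i + 1 := by rw [cast_add_one, ha]
  have ha2 : ((a + 2 : ℤ) : ZMod n) = i + 2 := by rw [cast_add_two, ha]
  by_cases hw1 : w = 1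
  · subst hw1; simp only [map_one, Equiv.Perm.one_apply]; omega
  obtain ⟨j, hj⟩ := (cs n).exists_rightDescent_of_ne_one hw1
  have hji : j ≠ i := fun h => hdi (h ▸ hj)
  have hlw1 : (cs n).length (w * (cs n).simple j) + 1 = N := by
    rw [← hw]; exact ((cs n).isRightDescent_iff).mp hj
  set w1 := w * (cs n).simple j with hw1def
  have hww1 : w = w1 * (cs n).simple j := by
    rw [hw1def, CoxeterSystem.simple_mul_simple_cancel_right]
  have hcancel1 : w1 * (cs n).simple j = w := hww1.symm
  have hndj : ¬ (cs n).IsRightDescent w1 j := by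
    intro hcon
    have h2 := ((cs n).isRightDescent_iff).mp hcon
    rw [hcancel1, hw] at h2
    omega
  have hNlen : (cs n).length (w * (cs n).simple i) = N + 1 := by
    rw [← hw]
    exact ((cs n).not_isRightDescent_iff).mp hdi
  by_cases hadj1 : j = i + 1
  · -- j = i + 1
    have s3a : sw j a = a := by
      refine sw_eq3 ?_ ?_
      · rw [ha, hadj1]; exact Ne.symm (n10 i)
      · rw [ha, hadj1, show i+1+1 = i+2 by ring]; exact Ne.symm (n20 i)
    have s1a1 : sw j (a + 1) = a + 2 := by
      rw [sw_eq1 (i := j) (a := a + 1) (by rw [ha1, hadj1])]; ring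
    by_cases hd1i : (cs n).IsRightDescent w1 i
    · -- w1 has a descent at i
      have hlw2 : (cs n).length (w1 * (cs n).simple i) + 1 = (cs n).length w1 :=
        ((cs n).isRightDescent_iff).mp hd1i
      set w2 := w1 * (cs n).simple i with hw2def
      have hww2 : w1 = w2 * (cs n).simple i := by
        rw [hw2def, CoxeterSystem.simple_mul_simple_cancel_right]
      by_cases hd2j : (cs n).IsRightDescent w2 j
      · -- contradiction via the braid relation
        exfalso
        have hlw3 : (cs n).length (w2 * (cs n).simple j) + 1 = (cs n).length w2 :=
          ((cs n).isRightDescent_iff).mp hd2j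
        set w3 := w2 * (cs n).simple j with hw3def
        have hww3 : w2 = w3 * (cs n).simple j := by
          rw [hw3def, CoxeterSystem.simple_mul_simple_cancel_right]
        have hbr : (cs n).simple j * (cs n).simple i * (cs n).simple j =
            (cs n).simple i * (cs n).simple j * (cs n).simple i := by
          rw [hadj1]; exact (simple_braid n i).symm
        have hkey : w * (cs n).simple i = w3 * (cs n).simple i * (cs n).simple j := by
          rw [hww1, hww2, hww3]
          calc w3 * (cs n).simple j * (cs n).simple i * (cs n).simple j * (cs n).simple i
              = w3 * ((cs n).simple j * (cs n).simple i * (cs n).simple j) *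
                  (cs n).simple i := by simp [mul_assoc]
            _ = w3 * ((cs n).simple i * (cs n).simple j * (cs n).simple i) *
                  (cs n).simple i := by rw [hbr]
            _ = w3 * (cs n).simple i * (cs n).simple j := by
                  simp [mul_assoc, CoxeterSystem.simple_mul_simple_self]
        have hle : (cs n).length (w * (cs n).simple i) ≤ (cs n).length w3 + 2 := by
          rw [hkey]
          have e1 := len_mul_simple_le n (w3 * (cs n).simple i) j
          have e2 := len_mul_simple_le n w3 i
          omega
        omega
      · -- B1
        have s1ia : sw i a = a + 1 := sw_eq1 ha
        have s3ia2 : sw i (a + 2) = a + 2 := by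
          refine sw_eq3 ?_ ?_
          · rw [ha2]; exact n20 i
          · rw [ha2]; exact n21 i
        have h1 : phi n w a = phi n w2 (a + 1) := by
          rw [hww1, hww2, phi_mul_simple, phi_mul_simple, s3a, s1ia]
        have h2 : phi n w (a + 1) = phi n w2 (a + 2) := by
          rw [hww1, hww2, phi_mul_simple, phi_mul_simple, s1a1, s3ia2]
        have c := IH ((cs n).length w2) (by omega) w2 rfl j hd2j (a + 1)
          (by rw [ha1, hadj1])
        rw [show a + 1 + 1 = a + 2 by ring] at c
        rw [h1, h2]
        exact c
    · -- A : no descent of w1 at i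
      have h1 : phi n w a = phi n w1 a := by
        rw [hww1, phi_mul_simple, s3a]
      have h2 : phi n w (a + 1) = phi n w1 (a + 2) := by
        rw [hww1, phi_mul_simple, s1a1]
      have c1 : phi n w1 a < phi n w1 (a + 1) :=
        IH ((cs n).length w1) (by omega) w1 rfl i hd1i a ha
      have c2 : phi n w1 (a + 1) < phi n w1 (a + 2) := by
        have := IH ((cs n).length w1) (by omega) w1 rfl j hndj (a + 1)
          (by rw [ha1, hadj1])
        rw [show a + 1 + 1 = a + 2 by ring] at this
        exact this
      rw [h1, h2]
      omega
  · by_cases hadj2 : i = j + 1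
    · -- i = j + 1
      have ha' : (a : ZMod n) = j + 1 := by rw [ha, hadj2]
      have hsub : ((a - 1 : ℤ) : ZMod n) = j := sub_one_eq ha'
      have s2a : sw j a = a - 1 := sw_eq2 ha'
      have s3a1 : sw j (a + 1) = a + 1 := by
        refine sw_eq3 ?_ ?_
        · rw [ha1, hadj2, show j+1+1 = j+2 by ring]; exact n20 j
        · rw [ha1, hadj2, show j+1+1 = j+2 by ring]; exact n21 j
      by_cases hd1i : (cs n).IsRightDescent w1 i
      · have hlw2 : (cs n).length (w1 * (cs n).simple i) + 1 = (cs n).length w1 :=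
          ((cs n).isRightDescent_iff).mp hd1i
        set w2 := w1 * (cs n).simple i with hw2def
        have hww2 : w1 = w2 * (cs n).simple i := by
          rw [hw2def, CoxeterSystem.simple_mul_simple_cancel_right]
        by_cases hd2j : (cs n).IsRightDescent w2 j
        · -- contradiction via the braid relation
          exfalso
          have hlw3 : (cs n).length (w2 * (cs n).simple j) + 1 = (cs n).length w2 :=
            ((cs n).isRightDescent_iff).mp hd2j
          set w3 := w2 * (cs n).simple j with hw3def
          have hww3 : w2 = w3 * (cs n).simple j := by
            rw [hw3def, CoxeterSystem.simple_mul_simple_cancel_right]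
          have hbr : (cs n).simple j * (cs n).simple i * (cs n).simple j =
              (cs n).simple i * (cs n).simple j * (cs n).simple i := by
            rw [hadj2]; exact simple_braid n j
          have hkey : w * (cs n).simple i = w3 * (cs n).simple i * (cs n).simple j := by
            rw [hww1, hww2, hww3]
            calc w3 * (cs n).simple j * (cs n).simple i * (cs n).simple j * (cs n).simple i
                = w3 * ((cs n).simple j * (cs n).simple i * (cs n).simple j) *
                    (cs n).simple i := by simp [mul_assoc]
              _ = w3 * ((cs n).simple i * (cs n).simple j * (cs n).simple i) *
                    (cs n).simple i := by rw [hbr]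
              _ = w3 * (cs n).simple i * (cs n).simple j := by
                    simp [mul_assoc, CoxeterSystem.simple_mul_simple_self]
          have hle : (cs n).length (w * (cs n).simple i) ≤ (cs n).length w3 + 2 := by
            rw [hkey]
            have e1 := len_mul_simple_le n (w3 * (cs n).simple i) j
            have e2 := len_mul_simple_le n w3 i
            omega
          omega
        · -- B1
          have s3is : sw i (a - 1) = a - 1 := by
            refine sw_eq3 ?_ ?_
            · rw [hsub]; exact hji
            · rw [hsub]; exact hadj1
          have s2ia1 : sw i (a + 1) = a := by
            rw [sw_eq2 (i := i) (a := a + 1) (by rw [ha1])]; ring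
          have h1 : phi n w a = phi n w2 (a - 1) := by
            rw [hww1, hww2, phi_mul_simple, phi_mul_simple, s2a, s3is]
          have h2 : phi n w (a + 1) = phi n w2 a := by
            rw [hww1, hww2, phi_mul_simple, phi_mul_simple, s3a1, s2ia1]
          have c := IH ((cs n).length w2) (by omega) w2 rfl j hd2j (a - 1) hsub
          rw [show a - 1 + 1 = a by ring] at c
          rw [h1, h2]
          exact c
      · -- A
        have h1 : phi n w a = phi n w1 (a - 1) := by
          rw [hww1, phi_mul_simple, s2a]
        have h2 : phi n w (a + 1) = phi n w1 (a + 1) := by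
          rw [hww1, phi_mul_simple, s3a1]
        have c1 : phi n w1 (a - 1) < phi n w1 a := by
          have := IH ((cs n).length w1) (by omega) w1 rfl j hndj (a - 1) hsub
          rw [show a - 1 + 1 = a by ring] at this
          exact this
        have c2 : phi n w1 a < phi n w1 (a + 1) :=
          IH ((cs n).length w1) (by omega) w1 rfl i hd1i a ha
        rw [h1, h2]
        omega
    · -- commuting case
      have s3a : sw j a = a := by
        refine sw_eq3 ?_ ?_
        · rw [ha]; exact Ne.symm hji
        · rw [ha]; exact hadj2
      have s3a1 : sw j (a + 1) = a + 1 := by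
        refine sw_eq3 ?_ ?_
        · rw [ha1]; exact fun h => hadj1 h.symm
        · rw [ha1]; intro h; exact hji (by linear_combination -h)
      by_cases hd1i : (cs n).IsRightDescent w1 i
      · -- contradiction via the commutation relation
        exfalso
        have hlw2 : (cs n).length (w1 * (cs n).simple i) + 1 = (cs n).length w1 :=
          ((cs n).isRightDescent_iff).mp hd1i
        set w2 := w1 * (cs n).simple i with hw2def
        have hww2 : w1 = w2 * (cs n).simple i := by
          rw [hw2def, CoxeterSystem.simple_mul_simple_cancel_right]
        have hkey : w * (cs n).simple i = w2 * (cs n).simple j := by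
          rw [hww1, hww2]
          calc w2 * (cs n).simple i * (cs n).simple j * (cs n).simple i
              = w2 * ((cs n).simple i * (cs n).simple j) * (cs n).simple i := by
                simp [mul_assoc]
            _ = w2 * ((cs n).simple j * (cs n).simple i) * (cs n).simple i := by
                rw [simple_comm n hji hadj1 hadj2]
            _ = w2 * (cs n).simple j := by
                simp [mul_assoc, CoxeterSystem.simple_mul_simple_self]
        have hle := len_mul_simple_le n w2 j
        rw [← hkey] at hle
        omega
      · -- A
        have h1 : phi n w a = phi n w1 a := by
          rw [hww1, phi_mul_simple, s3a]
        have h2 : phi n w (a + 1) = phi n w1 (a + 1) := by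
          rw [hww1, phi_mul_simple, s3a1]
        have c : phi n w1 a < phi n w1 (a + 1) :=
          IH ((cs n).length w1) (by omega) w1 rfl i hd1i a ha
        rw [h1, h2]
        exact c

/-- injectivity -/
theorem phi_inj : Function.Injective (phi n) := by
  rw [injective_iff_map_eq_one]
  intro w hker
  by_contra hne
  obtain ⟨j, hj⟩ := (cs n).exists_rightDescent_of_ne_one hne
  set w' := w * (cs n).simple j with hw'def
  have hcancel : w' * (cs n).simple j = w := by
    rw [hw'def, CoxeterSystem.simple_mul_simple_cancel_right]
  have hnd : ¬ (cs n).IsRightDescent w' j := by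
    intro hcon
    have h2 := ((cs n).isRightDescent_iff).mp hcon
    have h3 := ((cs n).isRightDescent_iff).mp hj
    rw [← hw'def] at h3
    rw [hcancel] at h2
    omega
  have hkey := key n ((cs n).length w') w' rfl j hnd (zrep j) (cast_zrep j)
  have hphi : phi n w' = sw j := by
    rw [hw'def, map_mul, hker, one_mul, phi_simple]
  rw [hphi] at hkey
  rw [sw_eq1 (cast_zrep j), sw_eq2 (i := j) (a := zrep j + 1) (by rw [cast_add_one, cast_zrep])] at hkey
  omega

end Key

end AffProof

/-- The affine symmetric group `S̃_n` (for `n > 2`) embeds into the group of bijections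
`w : ℤ → ℤ` satisfying `w(i + n) = w(i) + n` for all `i` and `Σ_{i=1}^n (w(i) − i) = 0`;
the generator `s_i` maps to the bijection exchanging `i + kn` and `i + 1 + kn` for all
`k ∈ ℤ` and fixing all other integers. -/
theorem affineSymmetricGroup_embeds (n : ℕ) (hn : 2 < n) :
    ∃ φ : AffineSymmetricGroup n →* Equiv.Perm ℤ,
      Function.Injective φ ∧
      (∀ i : ZMod n, ∀ a : ℤ,
        φ (PresentedGroup.of i) a =
          if (a : ZMod n) = i then a + 1
          else if (a : ZMod n) = i + 1 then a - 1
          else a) ∧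
      ∀ g : AffineSymmetricGroup n,
        (∀ a : ℤ, φ g (a + n) = φ g a + n) ∧
        ∑ a ∈ Finset.Icc (1 : ℤ) (n : ℤ), (φ g a - a) = 0 := by
  haveI : Fact (2 < n) := ⟨hn⟩
  refine ⟨AffProof.phi n, AffProof.phi_inj n, ?_, ?_⟩
  · intro i a
    rw [AffProof.phi_of n i]
    rfl
  · intro g
    exact AffProof.phi_mem_HH g
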